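/- Let F = F(X) be the free group on X = {x₁, …, xₙ} with n > 1, and let G = F/N be a finite quotient of F. Pick a prime p not dividing 6·|G|, and set L = N ∩ F⁶[F, F] and M = Lᵖ[L, L]. Let δ : F/M → F/L be the canonical homomorphism. Then for c = [x_i, x_j] = x_i x_j x_i⁻¹ x_j⁻¹ with i ≠ j, one has δ(C_{F/M}(cM)) = ⟨cL⟩. -/

import Mathlib

set_option linter.unusedVariables false

namespace CSP

variable {F : Type*} [Group F]

/-- The subgroup `Nᵖ[N,N]` generated by all `p`-th powers of elements of `N`
together with the commutator subgroup `[N,N]`. -/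
def powCommSubgroup (p : ℕ) (N : Subgroup F) : Subgroup F :=
  Subgroup.closure ((· ^ p) '' (N : Set F)) ⊔ ⁅N, N⁆

lemma powCommSubgroup_le (p : ℕ) (N : Subgroup F) : powCommSubgroup p N ≤ N := by
  apply sup_le
  · rw [Subgroup.closure_le]
    rintro _ ⟨x, hx, rfl⟩
    exact N.pow_mem hx p
  · refine Subgroup.commutator_le.2 fun a ha b hb => ?_
    rw [commutatorElement_def]
    exact N.mul_mem (N.mul_mem (N.mul_mem ha hb) (N.inv_mem ha)) (N.inv_mem hb)

instance powCommSubgroup_normal (p : ℕ) (N : Subgroup F) [hN : N.Normal] :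
    (powCommSubgroup p N).Normal := by
  have h1 : (Subgroup.closure ((· ^ p) '' (N : Set F))).Normal := by
    constructor
    intro n hn g
    have hmap : Subgroup.map (MulAut.conj g).toMonoidHom
        (Subgroup.closure ((· ^ p) '' (N : Set F)))
        ≤ Subgroup.closure ((· ^ p) '' (N : Set F)) := by
      rw [MonoidHom.map_closure]
      apply Subgroup.closure_mono
      rintro _ ⟨_, ⟨x, hx, rfl⟩, rfl⟩
      exact ⟨g * x * g⁻¹, hN.conj_mem x hx g, by simp [conj_pow, MulAut.conj_apply]⟩
    exact hmap ⟨n, hn, rfl⟩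
  haveI := h1
  unfold powCommSubgroup
  infer_instance

/-! ### Auxiliary lemmas -/

lemma mem_powCommSubgroup_of_pow {N : Subgroup F} {p : ℕ} {x : F} (hx : x ∈ N) :
    x ^ p ∈ powCommSubgroup p N := by
  have h : x ^ p ∈ ((· ^ p) '' (N : Set F)) := ⟨x, hx, rfl⟩
  exact SetLike.le_def.1 le_sup_left (Subgroup.subset_closure h)

open scoped commutatorElement in
lemma commutator_mem_powCommSubgroup {N : Subgroup F} {p : ℕ} {x y : F}
    (hx : x ∈ N) (hy : y ∈ N) : ⁅x, y⁆ ∈ powCommSubgroup p N :=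
  SetLike.le_def.1 le_sup_right (Subgroup.commutator_mem_commutator hx hy)

open MonoidAlgebra in
/-- The key combinatorial lemma about cosets in the group algebra `𝔽ₚ[Q]`. -/
lemma coset_lemma {Q : Type*} [Group Q] [Finite Q] {p : ℕ} (hp : p.Prime) (hp6 : ¬ p ∣ 6)
    (q qi cb : Q) (hqi : qi ∉ Subgroup.zpowers cb) (hcomm : q * cb = cb * q)
    (U V : MonoidAlgebra (ZMod p) Q)
    (hV : V = single qi 1 - single cb 1)
    (heq : U + single q 1 * V = V + single cb 1 * U) :
    q ∈ Subgroup.zpowers cb := by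
  classical
  haveI := Fintype.ofFinite Q
  by_contra hq
  set Cf : Finset Q := Finset.univ.filter (· ∈ Subgroup.zpowers cb) with hCf
  have hmemCf : ∀ g : Q, g ∈ Cf ↔ g ∈ Subgroup.zpowers cb := by
    intro g; simp [hCf]
  set e : MonoidAlgebra (ZMod p) Q := ∑ t ∈ Cf, single t 1 with he
  have esing : ∀ g : Q, e * single g 1 = ∑ t ∈ Cf, single (t * g) 1 := by
    intro g
    rw [he, Finset.sum_mul]
    exact Finset.sum_congr rfl fun t _ => by rw [single_mul_single, mul_one]
  have ecb : ∀ g : Q, e * single (cb * g) 1 = e * single g 1 := by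
    intro g
    rw [esing, esing]
    refine Finset.sum_nbij' (fun t => t * cb) (fun t => t * cb⁻¹) ?_ ?_ ?_ ?_ ?_
    · intro a ha; rw [hmemCf] at ha ⊢
      exact Subgroup.mul_mem _ ha (Subgroup.mem_zpowers cb)
    · intro a ha; rw [hmemCf] at ha ⊢
      exact Subgroup.mul_mem _ ha (Subgroup.inv_mem _ (Subgroup.mem_zpowers cb))
    · intro a _; simp
    · intro a _; simp
    · intro a _; rw [mul_assoc]
  have hone : single (1:Q) (1:ZMod p) = 1 := rfl
  have hecb1 : e * single cb 1 = e := by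
    have h := ecb 1
    rw [mul_one, hone, mul_one] at h
    exact h
  have ecoeff : ∀ g : Q, (e * single g 1 : MonoidAlgebra (ZMod p) Q).coeff 1
      = if g⁻¹ ∈ Subgroup.zpowers cb then 1 else 0 := by
    intro g
    rw [esing, coeff_sum, Finsupp.finset_sum_apply]
    have hterm : ∀ t ∈ Cf, (single (t*g) (1:ZMod p) : MonoidAlgebra (ZMod p) Q).coeff 1
        = if t = g⁻¹ then 1 else 0 := by
      intro t _
      rw [MonoidAlgebra.single_apply]
      exact if_congr mul_eq_one_iff_eq_inv rfl rfl
    rw [Finset.sum_congr rfl hterm, Finset.sum_ite_eq' Cf g⁻¹ (fun _ => (1:ZMod p))]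
    simp [hmemCf]
  have heq2 : e * (single q 1 * V) = e * V := by
    have h := congrArg (fun X => e * X) heq
    simp only [mul_add] at h
    rw [show e * (single cb 1 * U) = e * U by rw [← mul_assoc, hecb1]] at h
    rw [add_comm (e * V) (e * U)] at h
    exact add_left_cancel h
  have h1 : e * (single q 1 * single qi 1) = e * single (q * qi) 1 := by
    rw [single_mul_single, mul_one]
  have h2 : e * (single q 1 * single cb 1) = e * single q 1 := by
    rw [single_mul_single, mul_one, hcomm, ecb]
  have hmain : e * single (q * qi) 1 - e * single q 1 = e * single qi 1 - e := by
    rw [hV, mul_sub, mul_sub, mul_sub, h1, h2, hecb1] at heq2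
    exact heq2
  have subapply : ∀ (X Y : MonoidAlgebra (ZMod p) Q) (a : Q),
      (X - Y : MonoidAlgebra (ZMod p) Q).coeff a = X.coeff a - Y.coeff a := fun X Y a => Finsupp.sub_apply X.coeff Y.coeff a
  have hfin := congrArg (fun X : MonoidAlgebra (ZMod p) Q => (X : MonoidAlgebra (ZMod p) Q).coeff 1) hmain
  simp only [subapply] at hfin
  have he1 : (e : MonoidAlgebra (ZMod p) Q).coeff 1 = 1 := by
    have h := ecoeff 1
    rw [hone, mul_one] at h
    rw [h, inv_one, if_pos (Subgroup.one_mem _)]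
  have hq' : q⁻¹ ∉ Subgroup.zpowers cb := fun h => hq ((Subgroup.inv_mem_iff _).1 h)
  have hqi' : qi⁻¹ ∉ Subgroup.zpowers cb := fun h => hqi ((Subgroup.inv_mem_iff _).1 h)
  rw [ecoeff, ecoeff, ecoeff, he1, if_neg hq', if_neg hqi'] at hfin
  by_cases hcase : (q * qi)⁻¹ ∈ Subgroup.zpowers cb
  · rw [if_pos hcase] at hfin
    have h2' : ((2:ℕ) : ZMod p) = 0 := by push_cast; linear_combination hfin
    have hd := (ZMod.natCast_eq_zero_iff 2 p).1 h2'
    exact hp6 (hd.trans (by norm_num))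
  · rw [if_neg hcase] at hfin
    have h1' : ((1:ℕ) : ZMod p) = 0 := by push_cast; linear_combination hfin
    have hd := (ZMod.natCast_eq_zero_iff 1 p).1 h1'
    exact absurd (Nat.dvd_one.1 hd) hp.one_lt.ne'

open MonoidAlgebra in
/-- The action of `Q` on the additive group of `𝔽ₚ[Q]` by left multiplication,
viewed multiplicatively. -/
noncomputable def csAct (p : ℕ) (Q : Type*) [Group Q] :
    Q →* MulAut (Multiplicative (MonoidAlgebra (ZMod p) Q)) where
  toFun q := AddEquiv.toMultiplicative
    ((AddAut.mulLeft ((MonoidAlgebra.of (ZMod p) Q).toHomUnits q) :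
      AddAut (MonoidAlgebra (ZMod p) Q)))
  map_one' := by ext a; simp; rfl
  map_mul' x y := by ext a; simp [mul_assoc]; rfl

open MonoidAlgebra in
lemma csAct_apply (p : ℕ) {Q : Type*} [Group Q] (q : Q)
    (a : Multiplicative (MonoidAlgebra (ZMod p) Q)) :
    csAct p Q q a = Multiplicative.ofAdd (single q 1 * a.toAdd) := rfl

open scoped commutatorElement in
lemma finiteQuotK (n : ℕ) :
    Finite (FreeGroup (Fin n) ⧸ powCommSubgroup 6 (⊤ : Subgroup (FreeGroup (Fin n)))) := by
  set K := powCommSubgroup 6 (⊤ : Subgroup (FreeGroup (Fin n))) with hK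
  haveI : Group.FG (FreeGroup (Fin n)) :=
    Group.fg_iff.2 ⟨Set.range FreeGroup.of, FreeGroup.closure_range_of _, Set.finite_range _⟩
  have hcomm : ∀ a b : FreeGroup (Fin n) ⧸ K, a * b = b * a := by
    intro a b
    induction a using QuotientGroup.induction_on with | _ x =>
    induction b using QuotientGroup.induction_on with | _ y =>
    show QuotientGroup.mk (x * y) = QuotientGroup.mk (y * x)
    rw [QuotientGroup.eq]
    have h : (x * y)⁻¹ * (y * x) = ⁅y⁻¹, x⁻¹⁆ := by group
    rw [h]
    exact commutator_mem_powCommSubgroup trivial trivial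
  letI : CommGroup (FreeGroup (Fin n) ⧸ K) :=
    { (inferInstance : Group (FreeGroup (Fin n) ⧸ K)) with mul_comm := hcomm }
  exact CommGroup.finite_of_fg_torsion _ (fun g => by
    refine isOfFinOrder_iff_pow_eq_one.2 ⟨6, by norm_num, ?_⟩
    induction g using QuotientGroup.induction_on with | _ x =>
    show QuotientGroup.mk (x ^ 6) = 1
    rw [QuotientGroup.eq_one_iff]
    exact mem_powCommSubgroup_of_pow trivial)

lemma finiteQuotL (n : ℕ) (N : Subgroup (FreeGroup (Fin n))) [N.Normal]
    [Finite (FreeGroup (Fin n) ⧸ N)] :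
    Finite (FreeGroup (Fin n) ⧸ (N ⊓ powCommSubgroup 6 (⊤ : Subgroup (FreeGroup (Fin n))))) := by
  set K := powCommSubgroup 6 (⊤ : Subgroup (FreeGroup (Fin n))) with hK
  haveI := finiteQuotK n
  set f : (FreeGroup (Fin n) ⧸ (N ⊓ K)) → (FreeGroup (Fin n) ⧸ N) × (FreeGroup (Fin n) ⧸ K) :=
    fun x => (QuotientGroup.map (N ⊓ K) N (MonoidHom.id _) (by simp) x,
              QuotientGroup.map (N ⊓ K) K (MonoidHom.id _) (by simp) x) with hf
  apply Finite.of_injective f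
  intro a b hab
  induction a using QuotientGroup.induction_on with | _ x =>
  induction b using QuotientGroup.induction_on with | _ y =>
  rw [hf] at hab
  simp only [Prod.mk.injEq, QuotientGroup.map_mk, MonoidHom.id_apply] at hab
  obtain ⟨h1, h2⟩ := hab
  rw [QuotientGroup.eq] at h1 h2 ⊢
  exact ⟨h1, h2⟩

open MonoidAlgebra SemidirectProduct in
/-- The crossed homomorphism (Fox derivative with respect to `x_j`) into the
semidirect product `𝔽ₚ[F/L] ⋊ F/L`. -/
noncomputable def crossed {n : ℕ} (p : ℕ) (L : Subgroup (FreeGroup (Fin n))) [L.Normal]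
    (j : Fin n) :
    FreeGroup (Fin n) →*
      (Multiplicative (MonoidAlgebra (ZMod p) (FreeGroup (Fin n) ⧸ L))
        ⋊[csAct p (FreeGroup (Fin n) ⧸ L)] (FreeGroup (Fin n) ⧸ L)) :=
  FreeGroup.lift (fun k =>
    ⟨Multiplicative.ofAdd
        (if k = j then (1 : MonoidAlgebra (ZMod p) (FreeGroup (Fin n) ⧸ L)) else 0),
      QuotientGroup.mk (FreeGroup.of k)⟩)

open MonoidAlgebra SemidirectProduct in
lemma crossed_right {n : ℕ} (p : ℕ) (L : Subgroup (FreeGroup (Fin n))) [L.Normal] (j : Fin n)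
    (w : FreeGroup (Fin n)) :
    (crossed p L j w).right = QuotientGroup.mk w := by
  have h : (rightHom.comp (crossed p L j)) = QuotientGroup.mk' L := by
    apply FreeGroup.ext_hom
    intro a
    simp [crossed, rightHom_eq_right]
  have := DFunLike.congr_fun h w
  simpa [rightHom_eq_right] using this

open MonoidAlgebra SemidirectProduct in
lemma crossed_ker {n : ℕ} (p : ℕ) (L : Subgroup (FreeGroup (Fin n))) [L.Normal] (j : Fin n)
    (w : FreeGroup (Fin n)) (hw : w ∈ powCommSubgroup p L) :
    crossed p L j w = 1 := by
  have hL : ∀ l : FreeGroup (Fin n), l ∈ L → crossed p L j l = inl (crossed p L j l).left := by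
    intro l hl
    have h1 : (crossed p L j l).right = 1 := by
      rw [crossed_right]
      exact (QuotientGroup.eq_one_iff l).2 hl
    refine SemidirectProduct.ext rfl ?_
    rw [h1]
    rfl
  have hker : powCommSubgroup p L ≤ (crossed p L j).ker := by
    apply sup_le
    · rw [Subgroup.closure_le]
      rintro _ ⟨l, hl, rfl⟩
      rw [SetLike.mem_coe, MonoidHom.mem_ker, map_pow, hL l hl, ← map_pow]
      have hp1 : ((crossed p L j l).left) ^ p = 1 := by
        rw [← toAdd_eq_zero, toAdd_pow, ← Nat.cast_smul_eq_nsmul (ZMod p), ZMod.natCast_self,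
          zero_smul]
      rw [hp1, map_one]
    · refine Subgroup.commutator_le.2 fun a ha b hb => ?_
      rw [MonoidHom.mem_ker, map_commutatorElement, hL a ha, hL b hb, ← map_commutatorElement]
      rw [commutatorElement_eq_one_iff_commute.2 (Commute.all _ _), map_one]
  exact hker hw

open MonoidAlgebra SemidirectProduct in
lemma crossed_of_ne {n : ℕ} (p : ℕ) (L : Subgroup (FreeGroup (Fin n))) [L.Normal]
    (i j : Fin n) (hij : i ≠ j) :
    crossed p L j (FreeGroup.of i) = ⟨1, QuotientGroup.mk (FreeGroup.of i)⟩ := by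
  rw [crossed, FreeGroup.lift_apply_of, if_neg hij]
  rfl

open MonoidAlgebra SemidirectProduct in
lemma crossed_of_self {n : ℕ} (p : ℕ) (L : Subgroup (FreeGroup (Fin n))) [L.Normal] (j : Fin n) :
    crossed p L j (FreeGroup.of j)
      = ⟨Multiplicative.ofAdd 1, QuotientGroup.mk (FreeGroup.of j)⟩ := by
  rw [crossed, FreeGroup.lift_apply_of, if_pos rfl]

open MonoidAlgebra SemidirectProduct in
lemma crossed_c {n : ℕ} (p : ℕ) (L : Subgroup (FreeGroup (Fin n))) [L.Normal]
    (i j : Fin n) (hij : i ≠ j) :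
    crossed p L j (FreeGroup.of i * FreeGroup.of j * (FreeGroup.of i)⁻¹ * (FreeGroup.of j)⁻¹)
      = ⟨Multiplicative.ofAdd
          (single (QuotientGroup.mk (FreeGroup.of i)) 1
            - single ((QuotientGroup.mk (FreeGroup.of i) : FreeGroup (Fin n) ⧸ L)
                * QuotientGroup.mk (FreeGroup.of j)
                * (QuotientGroup.mk (FreeGroup.of i))⁻¹
                * (QuotientGroup.mk (FreeGroup.of j))⁻¹) 1),
        (QuotientGroup.mk (FreeGroup.of i) : FreeGroup (Fin n) ⧸ L)
          * QuotientGroup.mk (FreeGroup.of j)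
          * (QuotientGroup.mk (FreeGroup.of i))⁻¹
          * (QuotientGroup.mk (FreeGroup.of j))⁻¹⟩ := by
  set qi : FreeGroup (Fin n) ⧸ L := QuotientGroup.mk (FreeGroup.of i)
  set qj : FreeGroup (Fin n) ⧸ L := QuotientGroup.mk (FreeGroup.of j)
  rw [map_mul, map_mul, map_mul, map_inv, map_inv, crossed_of_ne p L i j hij,
    crossed_of_self p L j]
  set A1 : Multiplicative (MonoidAlgebra (ZMod p) (FreeGroup (Fin n) ⧸ L))
      ⋊[csAct p (FreeGroup (Fin n) ⧸ L)] (FreeGroup (Fin n) ⧸ L) := ⟨1, qi⟩ with hA1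
  set A2 : Multiplicative (MonoidAlgebra (ZMod p) (FreeGroup (Fin n) ⧸ L))
      ⋊[csAct p (FreeGroup (Fin n) ⧸ L)] (FreeGroup (Fin n) ⧸ L)
      := ⟨Multiplicative.ofAdd 1, qj⟩ with hA2
  have h12 : A1 * A2 = ⟨Multiplicative.ofAdd (single qi 1), qi * qj⟩ := by
    refine SemidirectProduct.ext ?_ rfl
    show (1 : Multiplicative _) * csAct p _ qi (Multiplicative.ofAdd 1) = _
    rw [one_mul, csAct_apply]
    simp
  have hinv1 : A1⁻¹ = ⟨1, qi⁻¹⟩ := by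
    refine SemidirectProduct.ext ?_ rfl
    show csAct p _ qi⁻¹ (1 : Multiplicative _)⁻¹ = 1
    rw [inv_one, map_one]
  have hinv2 : A2⁻¹ = ⟨Multiplicative.ofAdd (-(single qj⁻¹ 1)), qj⁻¹⟩ := by
    refine SemidirectProduct.ext ?_ rfl
    show csAct p _ qj⁻¹ (Multiplicative.ofAdd 1)⁻¹ = _
    rw [csAct_apply]
    simp
  rw [h12, hinv1]
  have h123 : ((⟨Multiplicative.ofAdd (single qi 1), qi * qj⟩ :
      Multiplicative (MonoidAlgebra (ZMod p) (FreeGroup (Fin n) ⧸ L))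
        ⋊[csAct p (FreeGroup (Fin n) ⧸ L)] (FreeGroup (Fin n) ⧸ L)) * ⟨1, qi⁻¹⟩)
      = ⟨Multiplicative.ofAdd (single qi 1), qi * qj * qi⁻¹⟩ := by
    refine SemidirectProduct.ext ?_ rfl
    show Multiplicative.ofAdd (single qi 1) * csAct p _ (qi * qj) 1 = _
    rw [map_one, mul_one]
  rw [h123, hinv2]
  refine SemidirectProduct.ext ?_ rfl
  show Multiplicative.ofAdd (single qi 1)
      * csAct p _ (qi * qj * qi⁻¹) (Multiplicative.ofAdd (-(single qj⁻¹ 1))) = _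
  rw [csAct_apply]
  simp only [toAdd_ofAdd, mul_neg, single_mul_single, mul_one]
  rw [← ofAdd_add]
  rw [← sub_eq_add_neg]

open MonoidAlgebra SemidirectProduct in
lemma not_mem_zpowers_aux (n : ℕ) (L : Subgroup (FreeGroup (Fin n))) [L.Normal]
    (hle : L ≤ powCommSubgroup 6 (⊤ : Subgroup (FreeGroup (Fin n))))
    (i j : Fin n) :
    (QuotientGroup.mk (FreeGroup.of i) : FreeGroup (Fin n) ⧸ L) ∉
      Subgroup.zpowers (QuotientGroup.mk
        (FreeGroup.of i * FreeGroup.of j * (FreeGroup.of i)⁻¹ * (FreeGroup.of j)⁻¹)) := by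
  set ψ0 : FreeGroup (Fin n) →* Multiplicative (ZMod 6) :=
    FreeGroup.lift (fun k => Multiplicative.ofAdd (if k = i then 1 else 0)) with hψ0
  have h6 : ∀ g : Multiplicative (ZMod 6), g ^ 6 = 1 := by
    intro g
    rw [← toAdd_eq_zero, toAdd_pow, ← Nat.cast_smul_eq_nsmul (ZMod 6), ZMod.natCast_self,
      zero_smul]
  have hK : powCommSubgroup 6 (⊤ : Subgroup (FreeGroup (Fin n))) ≤ ψ0.ker := by
    apply sup_le
    · rw [Subgroup.closure_le]
      rintro _ ⟨x, -, rfl⟩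
      rw [SetLike.mem_coe, MonoidHom.mem_ker, map_pow, h6]
    · refine Subgroup.commutator_le.2 fun a _ b _ => ?_
      rw [MonoidHom.mem_ker, map_commutatorElement,
        commutatorElement_eq_one_iff_commute.2 (Commute.all _ _)]
  have hker : L ≤ ψ0.ker := le_trans hle hK
  set ψ := QuotientGroup.lift L ψ0 hker with hψ
  have hψi : ψ (QuotientGroup.mk (FreeGroup.of i)) = Multiplicative.ofAdd 1 := by
    rw [hψ, QuotientGroup.lift_mk, hψ0, FreeGroup.lift_apply_of, if_pos rfl]
  have habc : ∀ a b : Multiplicative (ZMod 6), a * b * a⁻¹ * b⁻¹ = 1 := by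
    intro a b
    rw [mul_comm a b]
    group
  have hψc : ψ (QuotientGroup.mk
      (FreeGroup.of i * FreeGroup.of j * (FreeGroup.of i)⁻¹ * (FreeGroup.of j)⁻¹)) = 1 := by
    rw [hψ, QuotientGroup.lift_mk]
    rw [map_mul, map_mul, map_mul, map_inv, map_inv]
    exact habc _ _
  intro hmem
  obtain ⟨t, ht⟩ := Subgroup.mem_zpowers_iff.1 hmem
  have := congrArg ψ ht
  rw [map_zpow, hψc, one_zpow, hψi] at this
  exact absurd this (by decide)

open MonoidAlgebra SemidirectProduct in
/-- The hard direction: an element of `F` whose image in `F/M` centralizes `cM`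
has image in `F/L` lying in `⟨cL⟩`. -/
lemma key_lemma (n : ℕ) (p : ℕ) (hp : p.Prime) (hp6 : ¬ p ∣ 6)
    (N : Subgroup (FreeGroup (Fin n))) [N.Normal] [Finite (FreeGroup (Fin n) ⧸ N)]
    (i j : Fin n) (hij : i ≠ j) (y : FreeGroup (Fin n))
    (hy : (y * (FreeGroup.of i * FreeGroup.of j * (FreeGroup.of i)⁻¹ * (FreeGroup.of j)⁻¹))⁻¹
        * ((FreeGroup.of i * FreeGroup.of j * (FreeGroup.of i)⁻¹ * (FreeGroup.of j)⁻¹) * y)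
        ∈ powCommSubgroup p
            (N ⊓ powCommSubgroup 6 (⊤ : Subgroup (FreeGroup (Fin n))))) :
    (QuotientGroup.mk y :
        FreeGroup (Fin n) ⧸ (N ⊓ powCommSubgroup 6 (⊤ : Subgroup (FreeGroup (Fin n)))))
      ∈ Subgroup.zpowers (QuotientGroup.mk
          (FreeGroup.of i * FreeGroup.of j * (FreeGroup.of i)⁻¹ * (FreeGroup.of j)⁻¹)) := by
  set c : FreeGroup (Fin n) :=
    FreeGroup.of i * FreeGroup.of j * (FreeGroup.of i)⁻¹ * (FreeGroup.of j)⁻¹ with hc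
  set L : Subgroup (FreeGroup (Fin n)) :=
    N ⊓ powCommSubgroup 6 (⊤ : Subgroup (FreeGroup (Fin n))) with hL
  haveI : Finite (FreeGroup (Fin n) ⧸ L) := finiteQuotL n N
  set Φ := crossed p L j with hΦ
  have h1 : Φ ((y * c)⁻¹ * (c * y)) = 1 := crossed_ker p L j _ hy
  rw [map_mul, map_inv] at h1
  have h2 : Φ (y * c) = Φ (c * y) := inv_mul_eq_one.1 h1
  have h3 : Φ y * Φ c = Φ c * Φ y := by
    rw [← map_mul, ← map_mul]
    exact h2
  -- notation
  set qi : FreeGroup (Fin n) ⧸ L := QuotientGroup.mk (FreeGroup.of i) with hqi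
  set qj : FreeGroup (Fin n) ⧸ L := QuotientGroup.mk (FreeGroup.of j) with hqj
  set cb : FreeGroup (Fin n) ⧸ L := qi * qj * qi⁻¹ * qj⁻¹ with hcb
  have hcbeq : (QuotientGroup.mk c : FreeGroup (Fin n) ⧸ L) = cb := rfl
  have hC : Φ c = ⟨Multiplicative.ofAdd (single qi 1 - single cb 1), cb⟩ :=
    crossed_c p L i j hij
  set q : FreeGroup (Fin n) ⧸ L := QuotientGroup.mk y with hq
  have hyr : (Φ y).right = q := crossed_right p L j y
  -- the right components commute
  have hcommQ : q * cb = cb * q := by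
    have h5 := congrArg SemidirectProduct.right h3
    rw [hC, mul_right, mul_right, hyr] at h5
    dsimp only at h5
    exact h5
  -- the left components give the group-algebra equation
  have h4 := congrArg SemidirectProduct.left h3
  rw [hC, mul_left, mul_left, hyr] at h4
  dsimp only at h4
  rw [csAct_apply, csAct_apply] at h4
  have hadd := congrArg Multiplicative.toAdd h4
  simp only [toAdd_mul, toAdd_ofAdd] at hadd
  have := coset_lemma hp hp6 q qi cb
    (not_mem_zpowers_aux n L inf_le_right i j) hcommQ
    (Multiplicative.toAdd (Φ y).left) (single qi 1 - single cb 1) rfl hadd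
  rw [hcbeq]
  exact this

/-- Lemma 2.6: let `F` be the free group on `n > 1` generators, `G = F/N` a finite
quotient, `p` a prime not dividing `6|G|`, `L = N ∩ F⁶[F,F]`, `M = Lᵖ[L,L]` and
`δ : F/M → F/L` the canonical homomorphism.  Then for `c = [xᵢ, xⱼ]` with `i ≠ j`,
the image under `δ` of the centralizer of `cM` in `F/M` is the cyclic subgroup
`⟨cL⟩`. -/
theorem centralizer_commutator_image_eq_cyclic
    (n : ℕ) (hn : 1 < n) (N : Subgroup (FreeGroup (Fin n))) [N.Normal]
    [Finite (FreeGroup (Fin n) ⧸ N)]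
    (p : ℕ) (hp : p.Prime) (hpG : ¬ p ∣ 6 * Nat.card (FreeGroup (Fin n) ⧸ N))
    (i j : Fin n) (hij : i ≠ j) :
    Subgroup.map
      (QuotientGroup.map
        (powCommSubgroup p (N ⊓ powCommSubgroup 6 (⊤ : Subgroup (FreeGroup (Fin n)))))
        (N ⊓ powCommSubgroup 6 (⊤ : Subgroup (FreeGroup (Fin n))))
        (MonoidHom.id (FreeGroup (Fin n)))
        (by
          simpa using powCommSubgroup_le p
            (N ⊓ powCommSubgroup 6 (⊤ : Subgroup (FreeGroup (Fin n))))))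
      (Subgroup.centralizer
        {((FreeGroup.of i * FreeGroup.of j * (FreeGroup.of i)⁻¹ * (FreeGroup.of j)⁻¹ :
            FreeGroup (Fin n)) :
            FreeGroup (Fin n) ⧸
              powCommSubgroup p
                (N ⊓ powCommSubgroup 6 (⊤ : Subgroup (FreeGroup (Fin n)))))})
    = Subgroup.zpowers
        ((FreeGroup.of i * FreeGroup.of j * (FreeGroup.of i)⁻¹ * (FreeGroup.of j)⁻¹ :
            FreeGroup (Fin n)) :
          FreeGroup (Fin n) ⧸
            (N ⊓ powCommSubgroup 6 (⊤ : Subgroup (FreeGroup (Fin n))))) := by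
  have hp6 : ¬ p ∣ 6 := fun h => hpG (h.trans (dvd_mul_right 6 _))
  apply le_antisymm
  · rintro x hx
    rw [Subgroup.mem_map] at hx
    obtain ⟨z, hz, rfl⟩ := hx
    obtain ⟨y, rfl⟩ := QuotientGroup.mk_surjective z
    rw [QuotientGroup.map_mk]
    have h := Subgroup.mem_centralizer_iff.1 hz _ (Set.mem_singleton _)
    have hy : (y * (FreeGroup.of i * FreeGroup.of j * (FreeGroup.of i)⁻¹ * (FreeGroup.of j)⁻¹))⁻¹
        * ((FreeGroup.of i * FreeGroup.of j * (FreeGroup.of i)⁻¹ * (FreeGroup.of j)⁻¹) * y)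
        ∈ powCommSubgroup p
            (N ⊓ powCommSubgroup 6 (⊤ : Subgroup (FreeGroup (Fin n)))) := by
      rw [← QuotientGroup.eq]
      exact h.symm
    exact key_lemma n p hp hp6 N i j hij y hy
  · rw [Subgroup.zpowers_le]
    refine Subgroup.mem_map.2 ⟨QuotientGroup.mk
      (FreeGroup.of i * FreeGroup.of j * (FreeGroup.of i)⁻¹ * (FreeGroup.of j)⁻¹), ?_, ?_⟩
    · exact Subgroup.mem_centralizer_iff.2 (fun h hh => by
        rw [Set.mem_singleton_iff] at hh
        rw [hh])
    · rw [QuotientGroup.map_mk]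
      rfl

end CSP
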